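/- Local Enneper–Weierstrass construction yields conformal immersions: Let U ⊆ ℂ be a nonempty convex open set, n ≥ 2, and let F₁, …, F_n : U → ℂ be holomorphic functions whose derivatives satisfy Σ_{i=1}^{n} (F_i′(z))² = 0 for all z ∈ U. Define x : U → ℝⁿ by x_i(z) = Re F_i(z), and for z = u + iv write x_u(z), x_v(z) ∈ ℝⁿ for the partial derivatives of x in the directions 1 and i respectively. Then for every z ∈ U: ⟨x_u(z), x_u(z)⟩ = ⟨x_v(z), x_v(z)⟩ = (1/2)·Σ_{i=1}^{n} |F_i′(z)|² and ⟨x_u(z), x_v(z)⟩ = 0. If in addition the F_i′ have no common zero on U, then the real Fréchet derivative of x at every z ∈ U is injective; i.e., x is a conformal immersion with induced metric ds² = (1/2)(Σ|F_i′|²)|dz|². -/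

import Mathlib

/-- Local Enneper–Weierstrass construction yields conformal immersions (local
form of Theorem 2.14 of the paper): if F₁,…,F_n are holomorphic on a convex open
set U ⊆ ℂ with Σ (F_i′)² = 0, then x = (Re F₁,…,Re F_n) : U → ℝⁿ satisfies
⟨x_u,x_u⟩ = ⟨x_v,x_v⟩ = (1/2)Σ|F_i′|², ⟨x_u,x_v⟩ = 0, and if the F_i′ have no
common zero then the real Fréchet derivative of x is everywhere injective. -/
theorem stmt_14 (U : Set ℂ) (hU : IsOpen U) (hUconv : Convex ℝ U)
    (hUne : U.Nonempty) (n : ℕ) (hn : 2 ≤ n) (F : Fin n → ℂ → ℂ)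
    (hF : ∀ i, DifferentiableOn ℂ (F i) U)
    (hiso : ∀ z ∈ U, ∑ i, (deriv (F i) z) ^ 2 = 0)
    (x : ℂ → Fin n → ℝ) (hx : ∀ z i, x z i = (F i z).re) :
    (∀ z ∈ U,
        (∑ i, (fderiv ℝ x z 1 i) ^ 2
            = (1 / 2) * ∑ i, ‖deriv (F i) z‖ ^ 2) ∧
        (∑ i, (fderiv ℝ x z Complex.I i) ^ 2
            = (1 / 2) * ∑ i, ‖deriv (F i) z‖ ^ 2) ∧
        (∑ i, (fderiv ℝ x z 1 i) * (fderiv ℝ x z Complex.I i) = 0)) ∧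
    ((∀ z ∈ U, ∃ i, deriv (F i) z ≠ 0) →
      ∀ z ∈ U, Function.Injective (fderiv ℝ x z)) := by
  have hxeq : x = fun z i => (F i z).re := by
    funext z i; exact hx z i
  -- the derivative formula
  have key : ∀ z ∈ U, ∀ w : ℂ, ∀ i, fderiv ℝ x z w i = (w * deriv (F i) z).re := by
    intro z hz w i
    have hfd : HasFDerivAt x (ContinuousLinearMap.pi fun i : Fin n =>
        Complex.reCLM.comp
          (((1 : ℂ →L[ℂ] ℂ).smulRight (deriv (F i) z)).restrictScalars ℝ)) z := by
      rw [hxeq]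
      refine hasFDerivAt_pi.2 fun i => ?_
      have hFi : DifferentiableAt ℂ (F i) z := (hF i).differentiableAt (hU.mem_nhds hz)
      exact Complex.reCLM.hasFDerivAt.comp z
        (hFi.hasDerivAt.hasFDerivAt.restrictScalars ℝ)
    rw [hfd.fderiv]
    simp [smul_eq_mul]
  -- algebraic consequences of the isotropy relation
  have halg : ∀ z ∈ U,
      (∑ i, (deriv (F i) z).re ^ 2 = ∑ i, (deriv (F i) z).im ^ 2) ∧
      (∑ i, (deriv (F i) z).re * (deriv (F i) z).im = 0) := by
    intro z hz
    have h := hiso z hz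
    have hre := congrArg Complex.re h
    have him := congrArg Complex.im h
    simp only [Complex.re_sum, Complex.im_sum, pow_two, Complex.mul_re, Complex.mul_im,
      Complex.zero_re, Complex.zero_im] at hre him
    constructor
    · have : ∑ i, ((deriv (F i) z).re ^ 2 - (deriv (F i) z).im ^ 2) = 0 := by
        convert hre using 2 with i; ring
      rw [Finset.sum_sub_distrib] at this
      linarith
    · have : ∑ i, (2 * ((deriv (F i) z).re * (deriv (F i) z).im)) = 0 := by
        convert him using 2 with i; ring
      rw [← Finset.mul_sum] at this
      linarith
  have habs : ∀ z : ℂ, ∑ i, ‖deriv (F i) z‖ ^ 2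
      = ∑ i, (deriv (F i) z).re ^ 2 + ∑ i, (deriv (F i) z).im ^ 2 := by
    intro z
    rw [← Finset.sum_add_distrib]
    refine Finset.sum_congr rfl fun i _ => ?_
    rw [Complex.sq_norm, Complex.normSq_apply]; ring
  constructor
  · intro z hz
    obtain ⟨h1, h2⟩ := halg z hz
    have k1 : ∀ i, fderiv ℝ x z 1 i = (deriv (F i) z).re := by
      intro i; rw [key z hz 1 i]; simp
    have kI : ∀ i, fderiv ℝ x z Complex.I i = -(deriv (F i) z).im := by
      intro i; rw [key z hz Complex.I i]; simp [Complex.mul_re]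
    refine ⟨?_, ?_, ?_⟩
    · simp only [k1]
      rw [habs z]; linarith
    · simp only [kI]
      have : ∑ i, (-(deriv (F i) z).im) ^ 2 = ∑ i, (deriv (F i) z).im ^ 2 := by
        refine Finset.sum_congr rfl fun i _ => by ring
      rw [this, habs z]; linarith
    · simp only [k1, kI]
      have : ∑ i, (deriv (F i) z).re * -(deriv (F i) z).im
          = -∑ i, (deriv (F i) z).re * (deriv (F i) z).im := by
        rw [← Finset.sum_neg_distrib]
        exact Finset.sum_congr rfl fun i _ => by ring
      rw [this, h2, neg_zero]
  · intro hnc z hz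
    obtain ⟨h1, h2⟩ := halg z hz
    -- the sum of |F_i'|² is positive
    obtain ⟨j, hj⟩ := hnc z hz
    have hS : 0 < ∑ i, ‖deriv (F i) z‖ ^ 2 := by
      have hjpos : 0 < ‖deriv (F j) z‖ ^ 2 :=
        pow_pos (norm_pos_iff.mpr hj) 2
      have : ‖deriv (F j) z‖ ^ 2 ≤ ∑ i, ‖deriv (F i) z‖ ^ 2 :=
        Finset.single_le_sum (f := fun i => ‖deriv (F i) z‖ ^ 2)
          (fun i _ => by positivity) (Finset.mem_univ j)
      linarith
    have hker : ∀ w : ℂ, fderiv ℝ x z w = 0 → w = 0 := by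
      intro w hw
      have hcomp : ∀ i, w.re * (deriv (F i) z).re - w.im * (deriv (F i) z).im = 0 := by
        intro i
        have := congrFun hw i
        rw [key z hz w i] at this
        simpa [Complex.mul_re, mul_comm] using this
      have hsum : ∑ i, (w.re * (deriv (F i) z).re - w.im * (deriv (F i) z).im) ^ 2 = 0 := by
        refine Finset.sum_eq_zero fun i _ => by rw [hcomp i]; ring
      have hexp : ∑ i, (w.re * (deriv (F i) z).re - w.im * (deriv (F i) z).im) ^ 2
          = w.re ^ 2 * ∑ i, (deriv (F i) z).re ^ 2
            - 2 * w.re * w.im * ∑ i, (deriv (F i) z).re * (deriv (F i) z).im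
            + w.im ^ 2 * ∑ i, (deriv (F i) z).im ^ 2 := by
        simp_rw [Finset.mul_sum, ← Finset.sum_sub_distrib, ← Finset.sum_add_distrib]
        exact Finset.sum_congr rfl fun i _ => by ring
      rw [hexp, h2] at hsum
      have hS' : ∑ i, ‖deriv (F i) z‖ ^ 2 = 2 * ∑ i, (deriv (F i) z).im ^ 2 := by
        rw [habs z]; linarith
      have him0 : 0 < ∑ i, (deriv (F i) z).im ^ 2 := by linarith
      have : w.re ^ 2 + w.im ^ 2 = 0 := by
        rw [h1] at hsum
        nlinarith
      have hre0 : w.re = 0 := by nlinarith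
      have him0' : w.im = 0 := by nlinarith
      exact Complex.ext hre0 him0'
    intro w₁ w₂ hw
    have : fderiv ℝ x z (w₁ - w₂) = 0 := by rw [map_sub, hw, sub_self]
    exact sub_eq_zero.mp (hker _ this)
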